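/- The kernel g₂(P₁) of the symbol of the Rapcsák operator has dimension n² + (n−1)²; precisely, the subspace of symmetric bilinear forms A : V × V → ℝ satisfying A(X, C) = 0 for all X ∈ V and A(S, J X) = A(X, C) for all X ∈ V has dimension n² + (n−1)². -/

import Mathlib

set_option synthInstance.maxHeartbeats 1000000
set_option maxHeartbeats 1000000

noncomputable section

/-- The pointwise model `V = (Fin n → ℝ) × (Fin n → ℝ)` of the double tangent space
`T_x(TM)` for a spray on an `n`-dimensional manifold, in an adapted basis. -/
abbrev V (n : ℕ) : Type := (Fin n → ℝ) × (Fin n → ℝ)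

/-- The vertical endomorphism `J (x, y) = (0, x)`. -/
def Jmap (n : ℕ) : V n →ₗ[ℝ] V n where
  toFun p := (0, p.1)
  map_add' a b := by simp
  map_smul' c a := by simp

/-- The horizontal projector `P_h (x, y) = (x, 0)`. -/
def Ph (n : ℕ) : V n →ₗ[ℝ] V n where
  toFun p := (p.1, 0)
  map_add' a b := by simp
  map_smul' c a := by simp

/-- The `j`-th standard basis vector of `Fin n → ℝ`, indexed by `1 ≤ j ≤ n`
(zero if `j` is out of range). -/
def dlt (n j : ℕ) : Fin n → ℝ := fun i => if (i : ℕ) + 1 = j then 1 else 0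

/-- The horizontal basis vector `h_j`, `1 ≤ j ≤ n`. -/
def hvec (n j : ℕ) : V n := (dlt n j, 0)

/-- The vertical basis vector `v_j`, `1 ≤ j ≤ n`. -/
def vvec (n j : ℕ) : V n := (0, dlt n j)

/-- The spray vector `S = h_n`. -/
def Svec (n : ℕ) : V n := hvec n n

/-- The Liouville vector `C = v_n = J S`. -/
def Cvec (n : ℕ) : V n := vvec n n

/-- Bilinear forms on `V n`. -/
abbrev Bil (n : ℕ) := V n →ₗ[ℝ] V n →ₗ[ℝ] ℝ

/-- Trilinear forms on `V n` (bundled). -/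
abbrev Tri (n : ℕ) := V n →ₗ[ℝ] V n →ₗ[ℝ] V n →ₗ[ℝ] ℝ

/-- The kernel `g₂(P₁)` of the symbol of the Rapcsák operator: symmetric bilinear
forms `A` on `V` with `A(X, C) = 0` and `A(S, J X) = A(X, C)` for all `X`. -/
def g2P1 (n : ℕ) : Submodule ℝ (Bil n) where
  carrier := {A | (∀ X Y, A X Y = A Y X) ∧ (∀ X, A X (Cvec n) = 0) ∧
    (∀ X, A (Svec n) (Jmap n X) = A X (Cvec n))}
  add_mem' := by
    rintro a b ⟨ha1, ha2, ha3⟩ ⟨hb1, hb2, hb3⟩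
    refine ⟨fun X Y => ?_, fun X => ?_, fun X => ?_⟩ <;>
      simp only [LinearMap.add_apply]
    · linear_combination ha1 X Y + hb1 X Y
    · linear_combination ha2 X + hb2 X
    · linear_combination ha3 X + hb3 X
  zero_mem' := ⟨fun X Y => by simp, fun X => by simp, fun X => by simp⟩
  smul_mem' := by
    rintro c a ⟨ha1, ha2, ha3⟩
    refine ⟨fun X Y => ?_, fun X => ?_, fun X => ?_⟩ <;>
      simp only [LinearMap.smul_apply, smul_eq_mul]
    · linear_combination c * ha1 X Y
    · linear_combination c * ha2 X
    · linear_combination c * ha3 X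

namespace DimAux

/-- Index type for the basis of `V (m+1)`. -/
abbrev ι (m : ℕ) := Fin (m + 1) ⊕ Fin (m + 1)

/-- The adapted basis of `V (m+1)`. -/
def bV (m : ℕ) : Module.Basis (ι m) ℝ (V (m + 1)) :=
  (Pi.basisFun ℝ (Fin (m + 1))).prod (Pi.basisFun ℝ (Fin (m + 1)))

lemma bV_inl (m : ℕ) (i : Fin (m + 1)) :
    bV m (Sum.inl i) = (Pi.basisFun ℝ (Fin (m + 1)) i, 0) := by
  simp [bV]

lemma bV_inr (m : ℕ) (i : Fin (m + 1)) :
    bV m (Sum.inr i) = (0, Pi.basisFun ℝ (Fin (m + 1)) i) := by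
  simp [bV]

lemma dlt_eq (m : ℕ) : dlt (m + 1) (m + 1) = Pi.basisFun ℝ (Fin (m + 1)) (Fin.last m) := by
  funext j
  simp only [dlt, Pi.basisFun_apply, Pi.single_apply]
  by_cases h : j = Fin.last m
  · subst h; simp [Fin.last]
  · rw [if_neg h, if_neg]
    intro hc
    apply h
    have : (j : ℕ) = m := by omega
    exact Fin.ext this

lemma Cvec_eq (m : ℕ) : Cvec (m + 1) = bV m (Sum.inr (Fin.last m)) := by
  rw [bV_inr]
  show (0, dlt (m + 1) (m + 1)) = _
  rw [dlt_eq]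

lemma Svec_eq (m : ℕ) : Svec (m + 1) = bV m (Sum.inl (Fin.last m)) := by
  rw [bV_inl]
  show (dlt (m + 1) (m + 1), 0) = _
  rw [dlt_eq]

lemma Jmap_bV_inl (m : ℕ) (i : Fin (m + 1)) :
    Jmap (m + 1) (bV m (Sum.inl i)) = bV m (Sum.inr i) := by
  rw [bV_inl, bV_inr]; rfl

lemma Jmap_bV_inr (m : ℕ) (i : Fin (m + 1)) :
    Jmap (m + 1) (bV m (Sum.inr i)) = 0 := by
  rw [bV_inr]; rfl

lemma mem_g2P1_iff (m : ℕ) (A : Bil (m + 1)) :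
    A ∈ g2P1 (m + 1) ↔
      (∀ i j : ι m, A (bV m i) (bV m j) = A (bV m j) (bV m i)) ∧
      (∀ i : ι m, A (bV m i) (bV m (Sum.inr (Fin.last m))) = 0) ∧
      (∀ j : Fin (m + 1), A (bV m (Sum.inl (Fin.last m))) (bV m (Sum.inr j)) = 0) := by
  constructor
  · rintro ⟨h1, h2, h3⟩
    refine ⟨fun i j => h1 _ _, fun i => ?_, fun j => ?_⟩
    · rw [← Cvec_eq]; exact h2 _
    · rw [← Svec_eq, ← Jmap_bV_inl, h3]
      exact h2 _
  · rintro ⟨hs, hc, hr⟩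
    have hsym : A = A.flip := LinearMap.ext_basis (bV m) (bV m) fun i j => hs i j
    have hC : A.flip (Cvec (m + 1)) = 0 := by
      refine Module.Basis.ext (bV m) fun i => ?_
      simp only [LinearMap.flip_apply, Cvec_eq, LinearMap.zero_apply]
      exact hc i
    have hSJ : (A (Svec (m + 1))).comp (Jmap (m + 1)) = A.flip (Cvec (m + 1)) := by
      refine Module.Basis.ext (bV m) fun i => ?_
      rcases i with j | j
      · simp only [LinearMap.comp_apply, LinearMap.flip_apply, Jmap_bV_inl, Svec_eq, Cvec_eq]
        rw [hr j, hc (Sum.inl j)]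
      · simp only [LinearMap.comp_apply, LinearMap.flip_apply, Jmap_bV_inr, map_zero, Cvec_eq]
        exact (hc (Sum.inr j)).symm
    exact ⟨fun X Y => LinearMap.congr_fun (LinearMap.congr_fun hsym X) Y,
      fun X => LinearMap.congr_fun hC X, fun X => LinearMap.congr_fun hSJ X⟩

/-- Index type of free coefficients. -/
abbrev FreeIdx (m : ℕ) := Sym2 (Fin (m + 1)) ⊕ (Fin m × Fin m) ⊕ Sym2 (Fin m)

def hvEnt (m : ℕ) (f : FreeIdx m → ℝ) (i j : Fin (m + 1)) : ℝ :=
  if h : i = Fin.last m then 0 else if h' : j = Fin.last m then 0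
  else f (Sum.inr (Sum.inl (i.castPred h, j.castPred h')))

def vvEnt (m : ℕ) (f : FreeIdx m → ℝ) (i j : Fin (m + 1)) : ℝ :=
  if h : i = Fin.last m then 0 else if h' : j = Fin.last m then 0
  else f (Sum.inr (Sum.inr s(i.castPred h, j.castPred h')))

def matFun (m : ℕ) (f : FreeIdx m → ℝ) : Matrix (ι m) (ι m) ℝ := fun p q =>
  match p, q with
  | Sum.inl i, Sum.inl j => f (Sum.inl s(i, j))
  | Sum.inl i, Sum.inr j => hvEnt m f i j
  | Sum.inr i, Sum.inl j => hvEnt m f j i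
  | Sum.inr i, Sum.inr j => vvEnt m f i j

lemma hvEnt_add (m : ℕ) (f g : FreeIdx m → ℝ) (i j : Fin (m + 1)) :
    hvEnt m (f + g) i j = hvEnt m f i j + hvEnt m g i j := by
  unfold hvEnt; split_ifs <;> simp

lemma hvEnt_smul (m : ℕ) (c : ℝ) (f : FreeIdx m → ℝ) (i j : Fin (m + 1)) :
    hvEnt m (c • f) i j = c * hvEnt m f i j := by
  unfold hvEnt; split_ifs <;> simp

lemma vvEnt_add (m : ℕ) (f g : FreeIdx m → ℝ) (i j : Fin (m + 1)) :
    vvEnt m (f + g) i j = vvEnt m f i j + vvEnt m g i j := by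
  unfold vvEnt; split_ifs <;> simp

lemma vvEnt_smul (m : ℕ) (c : ℝ) (f : FreeIdx m → ℝ) (i j : Fin (m + 1)) :
    vvEnt m (c • f) i j = c * vvEnt m f i j := by
  unfold vvEnt; split_ifs <;> simp

def Φmat (m : ℕ) : (FreeIdx m → ℝ) →ₗ[ℝ] Matrix (ι m) (ι m) ℝ where
  toFun := matFun m
  map_add' f g := by
    funext p q
    rcases p with i | i <;> rcases q with j | j <;>
      simp [matFun, Matrix.add_apply, hvEnt_add, vvEnt_add]
  map_smul' c f := by
    funext p q
    rcases p with i | i <;> rcases q with j | j <;>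
      simp [matFun, Matrix.smul_apply, hvEnt_smul, vvEnt_smul]

def EM (m : ℕ) : Bil (m + 1) ≃ₗ[ℝ] Matrix (ι m) (ι m) ℝ :=
  LinearMap.toMatrix₂ (bV m) (bV m)

def Φ (m : ℕ) : (FreeIdx m → ℝ) →ₗ[ℝ] Bil (m + 1) :=
  (EM m).symm.toLinearMap.comp (Φmat m)

lemma EM_Φ (m : ℕ) (f : FreeIdx m → ℝ) : EM m (Φ m f) = matFun m f := by
  show EM m ((EM m).symm (Φmat m f)) = matFun m f
  rw [LinearEquiv.apply_symm_apply]
  rfl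

lemma EM_apply (m : ℕ) (A : Bil (m + 1)) (p q : ι m) :
    EM m A p q = A (bV m p) (bV m q) :=
  LinearMap.toMatrix₂_apply _ _ _ _ _

lemma Φ_basis (m : ℕ) (f : FreeIdx m → ℝ) (p q : ι m) :
    Φ m f (bV m p) (bV m q) = matFun m f p q := by
  rw [← EM_apply, EM_Φ]

lemma Φ_inj (m : ℕ) : Function.Injective (Φ m) := by
  intro f g hfg
  have hmat : matFun m f = matFun m g := by rw [← EM_Φ, ← EM_Φ, hfg]
  funext x
  rcases x with s | p
  · induction s using Sym2.ind with
    | _ i j => exact congrFun (congrFun hmat (Sum.inl i)) (Sum.inl j)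
  · rcases p with ⟨i, j⟩ | s
    · have h := congrFun (congrFun hmat (Sum.inl i.castSucc)) (Sum.inr j.castSucc)
      simp only [matFun, hvEnt, dif_neg (Fin.castSucc_lt_last i).ne,
        dif_neg (Fin.castSucc_lt_last j).ne, Fin.castPred_castSucc] at h
      exact h
    · induction s using Sym2.ind with
      | _ i j =>
        have h := congrFun (congrFun hmat (Sum.inr i.castSucc)) (Sum.inr j.castSucc)
        simp only [matFun, vvEnt, dif_neg (Fin.castSucc_lt_last i).ne,
          dif_neg (Fin.castSucc_lt_last j).ne, Fin.castPred_castSucc] at h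
        exact h

lemma Φ_mem (m : ℕ) (f : FreeIdx m → ℝ) : Φ m f ∈ g2P1 (m + 1) := by
  rw [mem_g2P1_iff]
  refine ⟨fun p q => ?_, fun p => ?_, fun j => ?_⟩ <;> simp only [Φ_basis]
  · rcases p with i | i <;> rcases q with j | j
    · show f (Sum.inl s(i, j)) = f (Sum.inl s(j, i))
      rw [Sym2.eq_swap]
    · rfl
    · rfl
    · show vvEnt m f i j = vvEnt m f j i
      unfold vvEnt
      split_ifs <;> first | rfl | rw [Sym2.eq_swap]
  · rcases p with i | i
    · show hvEnt m f i (Fin.last m) = 0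
      simp [hvEnt]
    · show vvEnt m f i (Fin.last m) = 0
      simp [vvEnt]
  · show hvEnt m f (Fin.last m) j = 0
    simp [hvEnt]

def hSub (m : ℕ) (A : Bil (m + 1))
    (hs : ∀ i j : ι m, A (bV m i) (bV m j) = A (bV m j) (bV m i)) :
    {f : Fin (m + 1) → Fin (m + 1) → ℝ // ∀ a b, f a b = f b a} :=
  ⟨fun i j => A (bV m (Sum.inl i)) (bV m (Sum.inl j)),
   fun i j => hs (Sum.inl i) (Sum.inl j)⟩

def vSub (m : ℕ) (A : Bil (m + 1))
    (hs : ∀ i j : ι m, A (bV m i) (bV m j) = A (bV m j) (bV m i)) :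
    {f : Fin m → Fin m → ℝ // ∀ a b, f a b = f b a} :=
  ⟨fun i j => A (bV m (Sum.inr i.castSucc)) (bV m (Sum.inr j.castSucc)),
   fun i j => hs (Sum.inr i.castSucc) (Sum.inr j.castSucc)⟩

def mkF (m : ℕ) (A : Bil (m + 1))
    (hs : ∀ i j : ι m, A (bV m i) (bV m j) = A (bV m j) (bV m i)) : FreeIdx m → ℝ :=
  Sum.elim
    (fun s => Sym2.lift (hSub m A hs) s)
    (Sum.elim
      (fun p => A (bV m (Sum.inl p.1.castSucc)) (bV m (Sum.inr p.2.castSucc)))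
      (fun s => Sym2.lift (vSub m A hs) s))

lemma Φ_surj (m : ℕ) (A : Bil (m + 1)) (hA : A ∈ g2P1 (m + 1)) : ∃ f, Φ m f = A := by
  rw [mem_g2P1_iff] at hA
  obtain ⟨hs, hc, hr⟩ := hA
  refine ⟨mkF m A hs, ?_⟩
  apply (EM m).injective
  rw [EM_Φ]
  funext p q
  rw [show (EM m A : Matrix (ι m) (ι m) ℝ) p q = A (bV m p) (bV m q) from EM_apply m A p q]
  rcases p with i | i <;> rcases q with j | j
  · show Sym2.lift _ s(i, j) = _
    rw [Sym2.lift_mk]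
    rfl
  · show hvEnt m _ i j = _
    unfold hvEnt
    split_ifs with h h'
    · subst h; exact (hr j).symm
    · subst h'; exact (hc (Sum.inl i)).symm
    · show A (bV m (Sum.inl ((i.castPred h).castSucc))) (bV m (Sum.inr ((j.castPred h').castSucc))) = _
      rw [Fin.castSucc_castPred, Fin.castSucc_castPred]
  · show hvEnt m _ j i = _
    unfold hvEnt
    split_ifs with h h'
    · subst h; exact ((hs (Sum.inr i) (Sum.inl (Fin.last m))).trans (hr i)).symm
    · subst h'; exact ((hs (Sum.inr (Fin.last m)) (Sum.inl j)).trans (hc (Sum.inl j))).symm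
    · show A (bV m (Sum.inl ((j.castPred h).castSucc))) (bV m (Sum.inr ((i.castPred h').castSucc))) = _
      rw [Fin.castSucc_castPred, Fin.castSucc_castPred]
      exact hs _ _
  · show vvEnt m _ i j = _
    unfold vvEnt
    split_ifs with h h'
    · subst h; exact ((hs (Sum.inr (Fin.last m)) (Sum.inr j)).trans (hc (Sum.inr j))).symm
    · subst h'; exact (hc (Sum.inr i)).symm
    · show Sym2.lift _ s(i.castPred h, j.castPred h') = _
      rw [Sym2.lift_mk]
      show A (bV m (Sum.inr ((i.castPred h).castSucc))) (bV m (Sum.inr ((j.castPred h').castSucc))) = _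
      rw [Fin.castSucc_castPred, Fin.castSucc_castPred]

lemma card_FreeIdx (m : ℕ) : Fintype.card (FreeIdx m) = (m + 1) ^ 2 + m ^ 2 := by
  simp only [Fintype.card_sum, Fintype.card_prod, Sym2.card, Fintype.card_fin]
  rw [Nat.choose_two_right, Nat.choose_two_right]
  obtain ⟨a, ha⟩ := Nat.even_mul_succ_self (m + 1)
  obtain ⟨b, hb⟩ := Nat.even_mul_succ_self m
  have h1 : (m + 1 + 1) * (m + 1 + 1 - 1) / 2 = a := by
    have h : (m + 1 + 1) * (m + 1 + 1 - 1) = 2 * a := by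
      rw [Nat.add_sub_cancel, mul_comm]; omega
    rw [h, Nat.mul_div_cancel_left _ (by norm_num : 0 < 2)]
  have h2 : (m + 1) * (m + 1 - 1) / 2 = b := by
    have h : (m + 1) * (m + 1 - 1) = 2 * b := by
      rw [Nat.add_sub_cancel, mul_comm]; omega
    rw [h, Nat.mul_div_cancel_left _ (by norm_num : 0 < 2)]
  rw [h1, h2]
  have ha' : a + a = m * m + 3 * m + 2 := by rw [← ha]; ring
  have hb' : b + b = m * m + m := by rw [← hb]; ring
  have hg : (m + 1) ^ 2 + m ^ 2 = m * m + m * m + 2 * m + 1 := by ring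
  rw [hg]
  linarith [ha', hb']

end DimAux

/-- the kernel `g₂(P₁)` of the symbol of the Rapcsák operator has
dimension `n² + (n − 1)²`. -/
theorem dim_g2P1 (n : ℕ) (hn : 1 ≤ n) :
    Module.finrank ℝ (g2P1 n) = n ^ 2 + (n - 1) ^ 2 := by
  obtain ⟨m, rfl⟩ : ∃ m, n = m + 1 := ⟨n - 1, (Nat.succ_pred_eq_of_pos hn).symm⟩
  have hrange : LinearMap.range (DimAux.Φ m) = g2P1 (m + 1) := by
    apply le_antisymm
    · rintro _ ⟨f, rfl⟩
      exact DimAux.Φ_mem m f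
    · rintro A hA
      exact DimAux.Φ_surj m A hA
  have e1 : (DimAux.FreeIdx m → ℝ) ≃ₗ[ℝ] ↥(g2P1 (m + 1)) :=
    (LinearEquiv.ofInjective (DimAux.Φ m) (DimAux.Φ_inj m)).trans
      (LinearEquiv.ofEq _ _ hrange)
  rw [← e1.finrank_eq, Module.finrank_fintype_fun_eq_card, DimAux.card_FreeIdx]
  simp
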